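/- Empirical averages with plug-in functions. Let S be a metric space equipped with its Borel σ-algebra and let Z_1, Z_2, … be i.i.d. S-valued random variables with common law P. Let M > 0, ε > 0, let g : ℝ → ℝ be a uniformly continuous function with |g| ≤ M, let R ⊆ S be measurable with P(Z_1 ∉ R) ≤ ε/M, and let h, h_1, h_2, … : S → ℝ be measurable functions with sup_{z ∈ R} |h_n(z) − h(z)| → 0 as n → ∞. Then almost surely limsup_{n → ∞} | n^{−1} Σ_{i=1}^n g(h_n(Z_i)) − E[g(h(Z_1))] | ≤ 2ε. -/

import Mathlib

open MeasureTheory Filter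

theorem empirical_averages_with_plugin_functions
    {Ω : Type*} [MeasurableSpace Ω] (P : Measure Ω) [IsProbabilityMeasure P]
    {S : Type*} [MetricSpace S] [MeasurableSpace S] [BorelSpace S]
    (Z : ℕ → Ω → S) (hZmeas : ∀ i, Measurable (Z i))
    (hindep : ProbabilityTheory.iIndepFun Z P)
    (hident : ∀ i, Measure.map (Z i) P = Measure.map (Z 0) P)
    (M ε : ℝ) (hM : 0 < M) (hε : 0 < ε)
    (g : ℝ → ℝ) (hgUC : UniformContinuous g) (hgbd : ∀ t : ℝ, |g t| ≤ M)
    (R : Set S) (hRmeas : MeasurableSet R)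
    (hPR : (P {ω | Z 0 ω ∉ R}).toReal ≤ ε / M)
    (h : S → ℝ) (hhmeas : Measurable h)
    (hseq : ℕ → S → ℝ) (hhseqmeas : ∀ m, Measurable (hseq m))
    (hconv : ∀ δ > (0 : ℝ), ∀ᶠ m in atTop, ∀ z ∈ R, |hseq m z - h z| ≤ δ) :
    ∀ᵐ ω ∂P, Filter.limsup (fun m : ℕ =>
        |(m : ℝ)⁻¹ * ∑ i ∈ Finset.range m, g (hseq m (Z i ω)) -
          ∫ ω', g (h (Z 0 ω')) ∂P|) atTop ≤ 2 * ε := by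
  classical
  have hident' : ∀ i, ProbabilityTheory.IdentDistrib (Z i) (Z 0) P P :=
    fun i => ⟨(hZmeas i).aemeasurable, (hZmeas 0).aemeasurable, hident i⟩
  -- the function g ∘ h
  have hφmeas : Measurable (fun z => g (h z)) :=
    hgUC.continuous.measurable.comp hhmeas
  -- the indicator of Rᶜ
  set χ : S → ℝ := Set.indicator Rᶜ (fun _ => (1 : ℝ)) with hχdef
  have hχmeas : Measurable χ :=
    (measurable_const.indicator hRmeas.compl)
  have hχ01 : ∀ z, 0 ≤ χ z ∧ χ z ≤ 1 := by
    intro z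
    simp only [hχdef, Set.indicator]
    split <;> norm_num
  -- SLLN for g ∘ h ∘ Z
  have hX : ∀ᵐ ω ∂P, Tendsto (fun n : ℕ =>
      (∑ i ∈ Finset.range n, g (h (Z i ω))) / n) atTop
      (nhds (∫ ω', g (h (Z 0 ω')) ∂P)) := by
    apply ProbabilityTheory.strong_law_ae_real (fun i ω => g (h (Z i ω)))
    · refine ⟨(hφmeas.comp (hZmeas 0)).aestronglyMeasurable, ?_⟩
      apply MeasureTheory.HasFiniteIntegral.of_bounded (C := M)
      filter_upwards with ω using by simpa [Real.norm_eq_abs] using hgbd (h (Z 0 ω))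
    · intro i j hij
      exact (hindep.comp (fun _ => fun z => g (h z)) (fun _ => hφmeas)).indepFun hij
    · intro i
      exact (hident' i).comp hφmeas
  -- SLLN for χ ∘ Z
  have hY : ∀ᵐ ω ∂P, Tendsto (fun n : ℕ =>
      (∑ i ∈ Finset.range n, χ (Z i ω)) / n) atTop
      (nhds (∫ ω', χ (Z 0 ω') ∂P)) := by
    apply ProbabilityTheory.strong_law_ae_real (fun i ω => χ (Z i ω))
    · refine ⟨(hχmeas.comp (hZmeas 0)).aestronglyMeasurable, ?_⟩
      apply MeasureTheory.HasFiniteIntegral.of_bounded (C := 1)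
      filter_upwards with ω
      rw [Real.norm_eq_abs, abs_le]
      constructor
      · linarith [(hχ01 (Z 0 ω)).1]
      · exact (hχ01 (Z 0 ω)).2
    · intro i j hij
      exact (hindep.comp (fun _ => χ) (fun _ => hχmeas)).indepFun hij
    · intro i
      exact (hident' i).comp hχmeas
  -- identify the integral of χ ∘ Z 0
  have hχint : ∫ ω', χ (Z 0 ω') ∂P ≤ ε / M := by
    have heq : (fun ω' => χ (Z 0 ω')) =
        Set.indicator (Z 0 ⁻¹' Rᶜ) (fun _ => (1 : ℝ)) := by
      funext ω'
      simp only [hχdef, Set.indicator, Set.mem_preimage]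
      split <;> rfl
    rw [heq]
    have : ∫ ω', Set.indicator (Z 0 ⁻¹' Rᶜ) (fun _ => (1 : ℝ)) ω' ∂P
        = (P (Z 0 ⁻¹' Rᶜ)).toReal := by
      have := MeasureTheory.integral_indicator_const (μ := P) (1 : ℝ)
        ((hZmeas 0) hRmeas.compl)
      simpa [measureReal_def] using this
    rw [this]
    have hsets : Z 0 ⁻¹' Rᶜ = {ω | Z 0 ω ∉ R} := rfl
    rw [hsets]
    exact hPR
  filter_upwards [hX, hY] with ω hA hB
  set E := ∫ ω', g (h (Z 0 ω')) ∂P with hE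
  set p := ∫ ω', χ (Z 0 ω') ∂P with hp
  refine le_of_forall_pos_le_add fun δ hδ => ?_
  have hδ3 : 0 < δ / 3 := by linarith
  -- uniform continuity modulus
  obtain ⟨η, hη, hmod⟩ := Metric.uniformContinuous_iff.1 hgUC (δ / 3) hδ3
  have hη2 : 0 < η / 2 := by linarith
  -- the eventual bound
  have hev1 : ∀ᶠ m : ℕ in atTop, ∀ z ∈ R, |hseq m z - h z| ≤ η / 2 := hconv _ hη2
  have hev2 : ∀ᶠ m : ℕ in atTop,
      |(∑ i ∈ Finset.range m, g (h (Z i ω))) / m - E| < δ / 3 := by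
    have := Metric.tendsto_atTop.1 hA (δ / 3) hδ3
    obtain ⟨N, hN⟩ := this
    filter_upwards [eventually_ge_atTop N] with m hm
    simpa [Real.dist_eq] using hN m hm
  have hev3 : ∀ᶠ m : ℕ in atTop,
      (∑ i ∈ Finset.range m, χ (Z i ω)) / m < p + δ / (6 * M) := by
    apply hB.eventually (gt_mem_nhds ?_)
    have : 0 < δ / (6 * M) := by positivity
    linarith
  have hev4 : ∀ᶠ m : ℕ in atTop, 1 ≤ m := eventually_ge_atTop 1
  have hcb : IsCoboundedUnder (· ≤ ·) atTop (fun m : ℕ =>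
      |(m : ℝ)⁻¹ * ∑ i ∈ Finset.range m, g (hseq m (Z i ω)) - E|) :=
    isCoboundedUnder_le_of_le atTop (x := (0:ℝ)) fun m => abs_nonneg _
  refine Filter.limsup_le_of_le hcb ?_
  filter_upwards [hev1, hev2, hev3, hev4] with m h1 h2 h3 h4
  have hm0 : (0 : ℝ) < m := by exact_mod_cast h4
  -- pointwise bound on each summand
  have hpt : ∀ i, |g (hseq m (Z i ω)) - g (h (Z i ω))| ≤ δ / 3 + 2 * M * χ (Z i ω) := by
    intro i
    by_cases hiR : Z i ω ∈ R
    · have hz := h1 (Z i ω) hiR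
      have : dist (hseq m (Z i ω)) (h (Z i ω)) < η := by
        rw [Real.dist_eq]; linarith
      have := le_of_lt (hmod this)
      rw [Real.dist_eq] at this
      have hzero : χ (Z i ω) = 0 := by
        simp [hχdef, Set.indicator, hiR]
      rw [hzero]
      linarith
    · have hone : χ (Z i ω) = 1 := by
        simp [hχdef, Set.indicator, hiR]
      rw [hone]
      calc |g (hseq m (Z i ω)) - g (h (Z i ω))|
          ≤ |g (hseq m (Z i ω))| + |g (h (Z i ω))| := abs_sub _ _
        _ ≤ M + M := add_le_add (hgbd _) (hgbd _)
        _ ≤ δ / 3 + 2 * M * 1 := by linarith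
  -- bound the difference of the two averages
  have hsum : |(m : ℝ)⁻¹ * ∑ i ∈ Finset.range m, g (hseq m (Z i ω)) -
      (∑ i ∈ Finset.range m, g (h (Z i ω))) / m| ≤
      δ / 3 + 2 * M * ((∑ i ∈ Finset.range m, χ (Z i ω)) / m) := by
    rw [div_eq_inv_mul, ← mul_sub, ← Finset.sum_sub_distrib, abs_mul,
      abs_of_nonneg (inv_nonneg.2 hm0.le)]
    have hsb : |∑ i ∈ Finset.range m, (g (hseq m (Z i ω)) - g (h (Z i ω)))| ≤
        ∑ i ∈ Finset.range m, (δ / 3 + 2 * M * χ (Z i ω)) :=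
      (Finset.abs_sum_le_sum_abs _ _).trans
        (Finset.sum_le_sum fun i _ => hpt i)
    calc (m : ℝ)⁻¹ * |∑ i ∈ Finset.range m, (g (hseq m (Z i ω)) - g (h (Z i ω)))|
        ≤ (m : ℝ)⁻¹ * ∑ i ∈ Finset.range m, (δ / 3 + 2 * M * χ (Z i ω)) := by
          exact mul_le_mul_of_nonneg_left hsb (inv_nonneg.2 hm0.le)
      _ = δ / 3 + 2 * M * ((∑ i ∈ Finset.range m, χ (Z i ω)) / m) := by
          rw [Finset.sum_add_distrib, Finset.sum_const, Finset.card_range,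
            ← Finset.mul_sum]
          field_simp
          ring
  have hBbd : (∑ i ∈ Finset.range m, χ (Z i ω)) / m ≤ ε / M + δ / (6 * M) := by
    have : p ≤ ε / M := hχint
    linarith
  have h2' : |(∑ i ∈ Finset.range m, g (h (Z i ω))) / m - E| ≤ δ / 3 := le_of_lt h2
  have htri : |(m : ℝ)⁻¹ * ∑ i ∈ Finset.range m, g (hseq m (Z i ω)) - E| ≤
      |(m : ℝ)⁻¹ * ∑ i ∈ Finset.range m, g (hseq m (Z i ω)) -
        (∑ i ∈ Finset.range m, g (h (Z i ω))) / m| +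
      |(∑ i ∈ Finset.range m, g (h (Z i ω))) / m - E| := abs_sub_le _ _ _
  have hmul : 2 * M * ((∑ i ∈ Finset.range m, χ (Z i ω)) / m) ≤
      2 * M * (ε / M + δ / (6 * M)) :=
    mul_le_mul_of_nonneg_left hBbd (by linarith)
  have hval : 2 * M * (ε / M + δ / (6 * M)) = 2 * ε + δ / 3 := by
    field_simp
    ring
  calc |(m : ℝ)⁻¹ * ∑ i ∈ Finset.range m, g (hseq m (Z i ω)) - E|
      ≤ (δ / 3 + 2 * M * ((∑ i ∈ Finset.range m, χ (Z i ω)) / m)) + δ / 3 :=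
        htri.trans (add_le_add hsum h2')
    _ ≤ (δ / 3 + (2 * ε + δ / 3)) + δ / 3 := by linarith [hmul, hval ▸ hmul]
    _ = 2 * ε + δ := by ring
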